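/- (Decomposition Lemma) For reduced words u and v over interval letters there are decompositions u = u₁·u′ and v = v′·v₁, unique up to commutation, such that: u′ is left-absorbed by v₁; v′ is properly right-absorbed by u₁; every letter of u′ commutes with every letter of v′; and u₁·v₁ is reduced. Consequently u·v reduces to u₁·v₁. -/

import Mathlib

structure Letter (N : ℕ) where
  lo : ℕ
  hi : ℕ
  lo_le_hi : lo ≤ hi
  hi_le : hi ≤ N

namespace PS

/-- `t` is a (non-strict) subletter of `s`. -/
def Sub {N : ℕ} (t s : Letter N) : Prop := s.lo ≤ t.lo ∧ t.hi ≤ s.hi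

/-- `t` is a proper subletter of `s`. -/
def PSub {N : ℕ} (t s : Letter N) : Prop := Sub t s ∧ t ≠ s

/-- Two letters commute iff they have distance at least 2. -/
def Comm {N : ℕ} (s t : Letter N) : Prop := s.hi + 2 ≤ t.lo ∨ t.hi + 2 ≤ s.lo

abbrev Word (N : ℕ) := List (Letter N)

/-- Commutation step: swap two adjacent commuting letters. -/
def SwapStep {N : ℕ} (u v : Word N) : Prop :=
  ∃ (x y : Word N) (s t : Letter N),
    Comm s t ∧ u = x ++ s :: t :: y ∧ v = x ++ t :: s :: y

/-- Cancellation step: replace an occurrence `s·t` or `t·s` by `s`, when `t ⊆ s`. -/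
def CancelStep {N : ℕ} (u v : Word N) : Prop :=
  ∃ (x y : Word N) (s t : Letter N),
    Sub t s ∧ (u = x ++ s :: t :: y ∨ u = x ++ t :: s :: y) ∧ v = x ++ s :: y

/-- Splitting step: replace an occurrence `s·s` by a (possibly empty) product of
proper subletters of `s`. -/
def SplitStep {N : ℕ} (u v : Word N) : Prop :=
  ∃ (x y : Word N) (s : Letter N) (l : Word N),
    (∀ t ∈ l, PSub t s) ∧ u = x ++ s :: s :: y ∧ v = x ++ l ++ y

/-- Commutation-equivalence of words. -/
def WEquiv {N : ℕ} : Word N → Word N → Prop := Relation.ReflTransGen SwapStep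

/-- Reduction: finitely many commutation and cancellation steps. -/
def Red {N : ℕ} : Word N → Word N → Prop :=
  Relation.ReflTransGen (fun u v => SwapStep u v ∨ CancelStep u v)

/-- Strong reduction: also allowing splitting steps. -/
def SRed {N : ℕ} : Word N → Word N → Prop :=
  Relation.ReflTransGen (fun u v => SwapStep u v ∨ CancelStep u v ∨ SplitStep u v)

/-- The congruence defining the monoid Γ. -/
def GammaRel {N : ℕ} : Word N → Word N → Prop :=
  Relation.EqvGen (fun u v => SwapStep u v ∨ CancelStep u v)

/-- A word is reduced if there is no pair of occurrences `i ≠ j` with `sᵢ ⊆ sⱼ`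
such that `sᵢ` commutes with every letter strictly between them. -/
def Reduced {N : ℕ} (w : Word N) : Prop :=
  ¬ ∃ (x y z : Word N) (a b : Letter N),
      w = x ++ a :: (y ++ b :: z) ∧
      ((Sub a b ∧ ∀ r ∈ y, Comm a r) ∨ (Sub b a ∧ ∀ r ∈ y, Comm b r))

/-- The letter `s` is left-absorbed by the word `v`. -/
def LAbsLetter {N : ℕ} (s : Letter N) (v : Word N) : Prop :=
  ∃ (x : Word N) (t : Letter N) (y : Word N),
    v = x ++ t :: y ∧ Sub s t ∧ ∀ r ∈ x, Comm s r

/-- The letter `s` is properly left-absorbed by the word `v`. -/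
def PLAbsLetter {N : ℕ} (s : Letter N) (v : Word N) : Prop :=
  ∃ (x : Word N) (t : Letter N) (y : Word N),
    v = x ++ t :: y ∧ PSub s t ∧ ∀ r ∈ x, Comm s r

/-- The letter `s` is right-absorbed by the word `w`. -/
def RAbsLetter {N : ℕ} (s : Letter N) (w : Word N) : Prop :=
  ∃ (x : Word N) (t : Letter N) (y : Word N),
    w = x ++ t :: y ∧ Sub s t ∧ ∀ r ∈ y, Comm s r

/-- The letter `s` is properly right-absorbed by the word `w`. -/
def PRAbsLetter {N : ℕ} (s : Letter N) (w : Word N) : Prop :=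
  ∃ (x : Word N) (t : Letter N) (y : Word N),
    w = x ++ t :: y ∧ PSub s t ∧ ∀ r ∈ y, Comm s r

/-- The word `u` is left-absorbed by `v`. -/
def LAbsWord {N : ℕ} (u v : Word N) : Prop := ∀ s ∈ u, LAbsLetter s v

/-- `v` bites `u` from the right: `v` left-absorbs some letter of the final segment of `u`. -/
def BitesRight {N : ℕ} (v u : Word N) : Prop :=
  ∃ (x : Word N) (s : Letter N) (y : Word N),
    u = x ++ s :: y ∧ (∀ r ∈ y, Comm s r) ∧ LAbsLetter s v

section Basics
variable {N : ℕ}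

theorem Letter.ext' {a b : Letter N} (h1 : a.lo = b.lo) (h2 : a.hi = b.hi) : a = b := by
  cases a; cases b; simp_all

theorem Comm.symm' {s t : Letter N} (h : Comm s t) : Comm t s := h.elim Or.inr Or.inl

theorem Sub.refl' (s : Letter N) : Sub s s := ⟨le_refl _, le_refl _⟩

theorem Sub.trans' {a b c : Letter N} (h1 : Sub a b) (h2 : Sub b c) : Sub a c :=
  ⟨le_trans h2.1 h1.1, le_trans h1.2 h2.2⟩

theorem Sub.antisymm' {a b : Letter N} (h1 : Sub a b) (h2 : Sub b a) : a = b :=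
  Letter.ext' (le_antisymm h2.1 h1.1) (le_antisymm h1.2 h2.2)

/-- transport: if `t ⊆ s` and `r` commutes with `s` then `r` commutes with `t`. -/
theorem comm_of_sub {r s t : Letter N} (hsub : Sub t s) (h : Comm r s) : Comm r t := by
  obtain ⟨h1, h2⟩ := hsub
  have := t.lo_le_hi; have := s.lo_le_hi; have := r.lo_le_hi
  rcases h with h | h
  · exact Or.inl (by omega)
  · exact Or.inr (by omega)

theorem not_comm_of_sub {s t : Letter N} (hsub : Sub t s) : ¬ Comm t s := by
  obtain ⟨h1, h2⟩ := hsub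
  have := t.lo_le_hi; have := s.lo_le_hi
  rintro (h | h) <;> omega

theorem not_comm_of_sub' {s t : Letter N} (hsub : Sub t s) : ¬ Comm s t :=
  fun h => not_comm_of_sub hsub h.symm'

end Basics
section Lists
variable {α : Type*}

theorem two_splits {x y p q : List α} {a b : α} (h : x ++ a :: y = p ++ b :: q) :
    (∃ m, p = x ++ a :: m ∧ y = m ++ b :: q) ∨ (x = p ∧ a = b ∧ y = q) ∨
    (∃ m, x = p ++ b :: m ∧ q = m ++ a :: y) := by
  rcases List.append_eq_append_iff.1 h with ⟨a', h1, h2⟩ | ⟨c', h1, h2⟩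
  · cases a' with
    | nil => simp at h1 h2; exact Or.inr (Or.inl ⟨h1.symm, h2.1, h2.2⟩)
    | cons c m =>
        obtain ⟨rfl, rfl⟩ : a = c ∧ y = m ++ b :: q := by simpa using h2
        exact Or.inl ⟨m, by simpa using h1, rfl⟩
  · cases c' with
    | nil => simp at h1 h2; exact Or.inr (Or.inl ⟨h1, h2.1.symm, h2.2.symm⟩)
    | cons c m =>
        obtain ⟨rfl, rfl⟩ : b = c ∧ q = m ++ a :: y := by simpa using h2
        exact Or.inr (Or.inr ⟨m, by simpa using h1, rfl⟩)

theorem split_of_append {p q x y : List α} {a : α} (h : p ++ q = x ++ a :: y) :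
    (∃ m, p = x ++ a :: m ∧ y = m ++ q) ∨ (∃ m, q = m ++ a :: y ∧ x = p ++ m) := by
  rcases List.append_eq_append_iff.1 h with ⟨a', h1, h2⟩ | ⟨c', h1, h2⟩
  · exact Or.inr ⟨a', h2, h1⟩
  · cases c' with
    | nil => exact Or.inr ⟨[], by simpa using h2.symm, by simpa using h1.symm ▸ by simp [h1]⟩
    | cons c m =>
        obtain ⟨rfl, rfl⟩ : c = a ∧ m ++ q = y := by simpa using h2.symm
        exact Or.inl ⟨m, by simpa using h1, rfl⟩

theorem last_of_concat {p q : List α} {a b : α} {m : List α}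
    (h : p ++ [a] = q ++ b :: m) : (m = [] ∧ a = b ∧ p = q) ∨ ∃ m', m = m' ++ [a] := by
  rcases m.eq_nil_or_concat with rfl | ⟨m', c, rfl⟩
  · have h2 : p ++ [a] = q ++ [b] := h
    have hl : p.length = q.length := by
      have := congrArg List.length h2; simp at this; omega
    rcases List.append_inj h2 (by simpa using hl) with ⟨hp, hab⟩
    simp at hab
    exact Or.inl ⟨rfl, hab, hp⟩
  · right
    rw [List.concat_eq_append] at h
    have : a = c := by
      have h2 := congrArg List.getLast? h
      rw [List.getLast?_concat] at h2
      have h3 : (q ++ b :: (m' ++ [c])).getLast? = some c := by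
        rw [show q ++ b :: (m' ++ [c]) = (q ++ b :: m') ++ [c] by simp, List.getLast?_concat]
      rw [h3] at h2
      exact Option.some_injective _ h2
    exact ⟨m', by rw [List.concat_eq_append, this]⟩
end Lists
section WEquivBasics
variable {N : ℕ}

theorem SwapStep.symm {u v : Word N} (h : SwapStep u v) : SwapStep v u := by
  obtain ⟨x, y, s, t, hc, h1, h2⟩ := h
  exact ⟨x, y, t, s, hc.symm', h2, h1⟩

theorem WEquiv.refl (u : Word N) : WEquiv u u := Relation.ReflTransGen.refl

theorem WEquiv.trans {u v w : Word N} (h1 : WEquiv u v) (h2 : WEquiv v w) : WEquiv u w :=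
  Relation.ReflTransGen.trans h1 h2

theorem WEquiv.symm {u v : Word N} (h : WEquiv u v) : WEquiv v u :=
  @Std.Symm.symm _ _ (@Relation.ReflTransGen.stdSymm _ _ ⟨fun _ _ => SwapStep.symm⟩) _ _ h

theorem WEquiv.single {u v : Word N} (h : SwapStep u v) : WEquiv u v :=
  Relation.ReflTransGen.single h

theorem SwapStep.append_left {u v : Word N} (p : Word N) (h : SwapStep u v) :
    SwapStep (p ++ u) (p ++ v) := by
  obtain ⟨x, y, s, t, hc, rfl, rfl⟩ := h
  exact ⟨p ++ x, y, s, t, hc, by simp, by simp⟩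

theorem SwapStep.append_right {u v : Word N} (q : Word N) (h : SwapStep u v) :
    SwapStep (u ++ q) (v ++ q) := by
  obtain ⟨x, y, s, t, hc, rfl, rfl⟩ := h
  exact ⟨x, y ++ q, s, t, hc, by simp, by simp⟩

theorem WEquiv.append_left {u v : Word N} (p : Word N) (h : WEquiv u v) :
    WEquiv (p ++ u) (p ++ v) :=
  Relation.ReflTransGen.lift _ (fun _ _ hs => SwapStep.append_left p hs) _ _ h

theorem WEquiv.append_right {u v : Word N} (q : Word N) (h : WEquiv u v) :
    WEquiv (u ++ q) (v ++ q) :=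
  Relation.ReflTransGen.lift _ (fun _ _ hs => SwapStep.append_right q hs) _ _ h

theorem WEquiv.append {u v u' v' : Word N} (h1 : WEquiv u u') (h2 : WEquiv v v') :
    WEquiv (u ++ v) (u' ++ v') :=
  (h1.append_right v).trans (h2.append_left u')

theorem SwapStep.perm {u v : Word N} (h : SwapStep u v) : u.Perm v := by
  obtain ⟨x, y, s, t, _, rfl, rfl⟩ := h
  exact List.Perm.append_left x (List.Perm.swap' _ _ (List.Perm.refl y))

theorem WEquiv.perm {u v : Word N} (h : WEquiv u v) : u.Perm v := by
  induction h with
  | refl => exact List.Perm.refl _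
  | tail _ hs ih => exact ih.trans hs.perm

theorem WEquiv.mem {u v : Word N} {a : Letter N} (h : WEquiv u v) (ha : a ∈ u) : a ∈ v :=
  h.perm.mem_iff.1 ha

theorem WEquiv.eq_nil {u : Word N} (h : WEquiv u ([] : Word N)) : u = [] :=
  List.eq_nil_of_length_eq_zero (by simpa using h.perm.length_eq)

/-- move a letter to the right across a block it commutes with -/
theorem wequiv_move_right {a : Letter N} {y : Word N} (x z : Word N)
    (hc : ∀ r ∈ y, Comm a r) : WEquiv (x ++ a :: (y ++ z)) (x ++ y ++ a :: z) := by
  induction y generalizing x with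
  | nil => simp [WEquiv.refl]
  | cons c y ih =>
      have step : SwapStep (x ++ a :: (c :: (y ++ z))) (x ++ c :: (a :: (y ++ z))) :=
        ⟨x, y ++ z, a, c, hc c (by simp), by simp, by simp⟩
      have := ih (x := x ++ [c]) (fun r hr => hc r (by simp [hr]))
      refine (WEquiv.single (by simpa using step)).trans ?_
      simpa using this

theorem wequiv_move_left {a : Letter N} {y : Word N} (x z : Word N)
    (hc : ∀ r ∈ y, Comm a r) : WEquiv (x ++ y ++ a :: z) (x ++ a :: (y ++ z)) :=
  (wequiv_move_right x z hc).symm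

theorem Red.of_wequiv {u v : Word N} (h : WEquiv u v) : Red u v :=
  Relation.ReflTransGen.mono (fun _ _ hs => Or.inl hs) _ _ h

theorem Red.trans {u v w : Word N} (h1 : Red u v) (h2 : Red v w) : Red u w :=
  Relation.ReflTransGen.trans h1 h2

end WEquivBasics
section BadPair
variable {N : ℕ}

/-- the condition for a bad pair with middle `y`. -/
def CondP (a b : Letter N) (y : Word N) : Prop :=
  (Sub a b ∧ ∀ r ∈ y, Comm a r) ∨ (Sub b a ∧ ∀ r ∈ y, Comm b r)

def BP (w : Word N) : Prop :=
  ∃ (x y z : Word N) (a b : Letter N),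
    w = x ++ a :: (y ++ b :: z) ∧ CondP a b y

theorem reduced_iff_not_bp {w : Word N} : Reduced w ↔ ¬ BP w := by
  unfold Reduced BP CondP
  constructor
  · intro h hbp
    obtain ⟨x, y, z, a, b, h1, h2⟩ := hbp
    exact h ⟨x, y, z, a, b, h1, h2⟩
  · intro h hbp
    obtain ⟨x, y, z, a, b, h1, h2⟩ := hbp
    exact h ⟨x, y, z, a, b, h1, h2⟩

theorem condP_mono {a b : Letter N} {y y' : Word N} (hsub : ∀ r ∈ y', r ∈ y)
    (h : CondP a b y) : CondP a b y' := by
  rcases h with ⟨h1, h2⟩ | ⟨h1, h2⟩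
  · exact Or.inl ⟨h1, fun r hr => h2 r (hsub r hr)⟩
  · exact Or.inr ⟨h1, fun r hr => h2 r (hsub r hr)⟩

theorem condP_swap {a b : Letter N} (h : CondP a b ([] : Word N)) : CondP b a ([] : Word N) := by
  rcases h with ⟨h1, _⟩ | ⟨h1, _⟩
  · exact Or.inr ⟨h1, by simp⟩
  · exact Or.inl ⟨h1, by simp⟩

theorem bp_of_swap {w w' : Word N} (h : SwapStep w w') (hbp : BP w') : BP w := by
  obtain ⟨x, y₀, s, t, hc, hw, hw'⟩ := h
  obtain ⟨X, Y, Z, a, b, h1, cond⟩ := hbp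
  rw [hw'] at h1
  have h1' : X ++ a :: (Y ++ b :: Z) = x ++ t :: (s :: y₀) := h1.symm
  rcases two_splits h1' with ⟨m, hm1, hm2⟩ | ⟨e1, e2, e3⟩ | ⟨m, hm1, hm2⟩
  · -- hm1 : x = X ++ a :: m, hm2 : Y ++ b :: Z = m ++ t :: (s :: y₀)
    rcases two_splits hm2 with ⟨k, hk1, hk2⟩ | ⟨f1, f2, f3⟩ | ⟨k, hk1, hk2⟩
    · -- hk1 : m = Y ++ b :: k, hk2 : Z = k ++ t :: (s :: y₀)
      refine ⟨X, Y, k ++ s :: t :: y₀, a, b, ?_, cond⟩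
      rw [hw, hm1, hk1]; simp
    · -- f1 : Y = m, f2 : b = t, f3 : Z = s :: y₀
      refine ⟨X, m ++ [s], y₀, a, b, ?_, ?_⟩
      · rw [hw, hm1, ← f2]; simp
      · rcases cond with ⟨hs1, hs2⟩ | ⟨hs1, hs2⟩
        · refine Or.inl ⟨hs1, fun r hr => ?_⟩
          rcases List.mem_append.1 hr with hr | hr
          · exact hs2 r (f1 ▸ hr)
          · simp at hr; subst hr
            exact (comm_of_sub (f2 ▸ hs1) hc).symm'
        · refine Or.inr ⟨hs1, fun r hr => ?_⟩
          rcases List.mem_append.1 hr with hr | hr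
          · exact hs2 r (f1 ▸ hr)
          · simp at hr; subst hr; exact f2 ▸ hc.symm'
    · -- hk1 : Y = m ++ t :: k, hk2 : s :: y₀ = k ++ b :: Z
      cases k with
      | nil =>
          obtain ⟨f1, f2⟩ : s = b ∧ y₀ = Z := by
            rw [List.nil_append] at hk2
            exact ⟨(List.cons.injEq _ _ _ _ ▸ hk2).1, (List.cons.injEq _ _ _ _ ▸ hk2).2⟩
          refine ⟨X, m, t :: Z, a, b, ?_, ?_⟩
          · rw [hw, hm1, ← f1, ← f2]; simp
          · exact condP_mono (fun r hr => by simp [hk1, hr]) cond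
      | cons c k₂ =>
          obtain ⟨f1, f2⟩ : s = c ∧ y₀ = k₂ ++ b :: Z := by
            exact ⟨(List.cons.injEq _ _ _ _ ▸ hk2).1, (List.cons.injEq _ _ _ _ ▸ hk2).2⟩
          refine ⟨X, m ++ s :: t :: k₂, Z, a, b, ?_, ?_⟩
          · rw [hw, hm1, f2]; simp
          · refine condP_mono (fun r hr => ?_) cond
            rw [hk1, ← f1]
            simp at hr ⊢
            tauto
  · -- e1 : X = x, e2 : a = t, e3 : Y ++ b :: Z = s :: y₀
    cases Y with
    | nil =>
        obtain ⟨f1, f2⟩ : b = s ∧ Z = y₀ := by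
          rw [List.nil_append] at e3
          exact ⟨(List.cons.injEq _ _ _ _ ▸ e3).1, (List.cons.injEq _ _ _ _ ▸ e3).2⟩
        refine ⟨x, [], y₀, b, a, ?_, condP_swap cond⟩
        rw [hw, f1, e2]; simp
    | cons c Y₂ =>
        obtain ⟨f1, f2⟩ : c = s ∧ Y₂ ++ b :: Z = y₀ := by
          exact ⟨(List.cons.injEq _ _ _ _ ▸ e3).1, (List.cons.injEq _ _ _ _ ▸ e3).2⟩
        refine ⟨x ++ [s], Y₂, Z, a, b, ?_, ?_⟩
        · rw [hw, ← f2, e2]; simp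
        · exact condP_mono (fun r hr => by simp [hr]) cond
  · -- hm1 : X = x ++ t :: m, hm2 : s :: y₀ = m ++ a :: (Y ++ b :: Z)
    cases m with
    | nil =>
        obtain ⟨f1, f2⟩ : s = a ∧ y₀ = Y ++ b :: Z := by
          rw [List.nil_append] at hm2
          exact ⟨(List.cons.injEq _ _ _ _ ▸ hm2).1, (List.cons.injEq _ _ _ _ ▸ hm2).2⟩
        refine ⟨x, t :: Y, Z, a, b, ?_, ?_⟩
        · rw [hw, f1, f2]; simp
        · rcases cond with ⟨hs1, hs2⟩ | ⟨hs1, hs2⟩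
          · refine Or.inl ⟨hs1, fun r hr => ?_⟩
            rcases List.mem_cons.1 hr with rfl | hr
            · exact f1 ▸ hc
            · exact hs2 r hr
          · refine Or.inr ⟨hs1, fun r hr => ?_⟩
            rcases List.mem_cons.1 hr with rfl | hr
            · exact (comm_of_sub hs1 (f1 ▸ hc.symm')).symm'
            · exact hs2 r hr
    | cons c m₂ =>
        obtain ⟨f1, f2⟩ : s = c ∧ y₀ = m₂ ++ a :: (Y ++ b :: Z) := by
          exact ⟨(List.cons.injEq _ _ _ _ ▸ hm2).1, (List.cons.injEq _ _ _ _ ▸ hm2).2⟩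
        refine ⟨x ++ s :: t :: m₂, Y, Z, a, b, ?_, cond⟩
        rw [hw, f2]; simp

end BadPair
section Invariance
variable {N : ℕ}

theorem bp_of_wequiv {u v : Word N} (h : WEquiv u v) (hbp : BP v) : BP u := by
  induction h with
  | refl => exact hbp
  | tail _ hs ih => exact ih (bp_of_swap hs hbp)

theorem reduced_of_wequiv {u v : Word N} (h : WEquiv u v) (hr : Reduced u) : Reduced v := by
  rw [reduced_iff_not_bp] at hr ⊢
  exact fun hbp => hr (bp_of_wequiv h hbp)

theorem bp_append_left {x z : Word N} (h : BP x) : BP (x ++ z) := by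
  obtain ⟨X, Y, Z, a, b, rfl, cond⟩ := h
  exact ⟨X, Y, Z ++ z, a, b, by simp, cond⟩

theorem bp_append_right {x z : Word N} (h : BP z) : BP (x ++ z) := by
  obtain ⟨X, Y, Z, a, b, rfl, cond⟩ := h
  exact ⟨x ++ X, Y, Z, a, b, by simp, cond⟩

theorem reduced_append_left {x z : Word N} (h : Reduced (x ++ z)) : Reduced x := by
  rw [reduced_iff_not_bp] at h ⊢
  exact fun hbp => h (bp_append_left hbp)

theorem reduced_append_right {x z : Word N} (h : Reduced (x ++ z)) : Reduced z := by
  rw [reduced_iff_not_bp] at h ⊢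
  exact fun hbp => h (bp_append_right hbp)

theorem labs_of_swap {s : Letter N} {v v' : Word N} (hs : SwapStep v v')
    (h : LAbsLetter s v) : LAbsLetter s v' := by
  obtain ⟨p, q, c, d, hc, hv, hv'⟩ := hs
  obtain ⟨x, t, y, h1, hsub, hcomm⟩ := h
  rw [hv] at h1
  rcases two_splits h1.symm with ⟨m, hm1, hm2⟩ | ⟨e1, e2, e3⟩ | ⟨m, hm1, hm2⟩
  ·
    exact ⟨x, t, m ++ d :: c :: q, by rw [hv', hm1]; simp, hsub, hcomm⟩
  · -- x = p, t = c, y = d :: q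
    refine ⟨p ++ [d], t, q, by rw [hv', ← e2]; simp, hsub, fun r hr => ?_⟩
    rcases List.mem_append.1 hr with hr | hr
    · exact hcomm r (e1 ▸ hr)
    · simp at hr; subst hr
      exact (comm_of_sub hsub (e2 ▸ hc.symm')).symm'
  · -- hm1 : x = p ++ c :: m, hm2 : d :: q = m ++ t :: y
    cases m with
    | nil =>
        obtain ⟨f1, f2⟩ : d = t ∧ q = y := by
          rw [List.nil_append] at hm2
          exact ⟨(List.cons.injEq _ _ _ _ ▸ hm2).1, (List.cons.injEq _ _ _ _ ▸ hm2).2⟩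
        refine ⟨p, t, c :: y, by rw [hv', f1, f2], hsub, fun r hr => hcomm r ?_⟩
        rw [hm1]; simp [hr]
    | cons e m₂ =>
        obtain ⟨f1, f2⟩ : d = e ∧ q = m₂ ++ t :: y := by
          exact ⟨(List.cons.injEq _ _ _ _ ▸ hm2).1, (List.cons.injEq _ _ _ _ ▸ hm2).2⟩
        refine ⟨p ++ d :: c :: m₂, t, y, by rw [hv', f1, f2]; simp, hsub, fun r hr => hcomm r ?_⟩
        rw [hm1, ← f1]
        simp at hr ⊢
        tauto

theorem labs_of_wequiv {s : Letter N} {v v' : Word N} (h : WEquiv v v')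
    (hl : LAbsLetter s v) : LAbsLetter s v' := by
  induction h with
  | refl => exact hl
  | tail _ hs ih => exact labs_of_swap hs ih

theorem prabs_of_swap {s : Letter N} {v v' : Word N} (hs : SwapStep v v')
    (h : PRAbsLetter s v) : PRAbsLetter s v' := by
  obtain ⟨p, q, c, d, hc, hv, hv'⟩ := hs
  obtain ⟨x, t, y, h1, hsub, hcomm⟩ := h
  rw [hv] at h1
  rcases two_splits h1.symm with ⟨m, hm1, hm2⟩ | ⟨e1, e2, e3⟩ | ⟨m, hm1, hm2⟩
  · -- t in p : hm1 : p = x ++ t :: m, hm2 : y = m ++ c :: d :: q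
    refine ⟨x, t, m ++ d :: c :: q, by rw [hv', hm1]; simp, hsub, fun r hr => hcomm r ?_⟩
    rw [hm2]
    simp at hr ⊢
    tauto
  · -- x = p, t = c, y = d :: q
    refine ⟨p ++ [d], t, q, by rw [hv', ← e2]; simp, hsub, fun r hr => hcomm r ?_⟩
    rw [e3]; simp [hr]
  · cases m with
    | nil =>
        obtain ⟨f1, f2⟩ : d = t ∧ q = y := by
          rw [List.nil_append] at hm2
          exact ⟨(List.cons.injEq _ _ _ _ ▸ hm2).1, (List.cons.injEq _ _ _ _ ▸ hm2).2⟩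
        refine ⟨p, t, c :: y, by rw [hv', f1, f2], hsub, fun r hr => ?_⟩
        rcases List.mem_cons.1 hr with rfl | hr
        · exact (comm_of_sub hsub.1 (f1 ▸ hc)).symm'
        · exact hcomm r hr
    | cons e m₂ =>
        obtain ⟨f1, f2⟩ : d = e ∧ q = m₂ ++ t :: y := by
          exact ⟨(List.cons.injEq _ _ _ _ ▸ hm2).1, (List.cons.injEq _ _ _ _ ▸ hm2).2⟩
        exact ⟨p ++ d :: c :: m₂, t, y, by rw [hv', f1, f2]; simp, hsub, hcomm⟩

theorem prabs_of_wequiv {s : Letter N} {v v' : Word N} (h : WEquiv v v')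
    (hl : PRAbsLetter s v) : PRAbsLetter s v' := by
  induction h with
  | refl => exact hl
  | tail _ hs ih => exact prabs_of_swap hs ih

end Invariance

section Deletion
variable {N : ℕ}

theorem bp_insert {a : Letter N} {x y : Word N}
    (hcomm : (∀ r ∈ y, Comm a r) ∨ (∀ r ∈ x, Comm a r))
    (h : BP (x ++ y)) : BP (x ++ a :: y) := by
  obtain ⟨X, M, Z, c, d, h1, cond⟩ := h
  rcases split_of_append h1 with ⟨m, hm1, hm2⟩ | ⟨m, hm1, hm2⟩
  · -- c in x : x = X ++ c :: m, M ++ d :: Z = m ++ y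
    rcases split_of_append hm2.symm with ⟨k, hk1, hk2⟩ | ⟨k, hk1, hk2⟩
    · -- d in m (x) : m = M ++ d :: k, Z = k ++ y
      exact ⟨X, M, k ++ a :: y, c, d, by rw [hm1, hk1]; simp, cond⟩
    · -- d in y : y = k ++ d :: Z, M = m ++ k
      refine ⟨X, m ++ a :: k, Z, c, d, by rw [hm1, hk1]; simp, ?_⟩
      have had : Comm a d ∨ Comm a c := by
        rcases hcomm with hc | hc
        · exact Or.inl (hc d (by rw [hk1]; simp))
        · exact Or.inr (hc c (by rw [hm1]; simp))
      rcases cond with ⟨hs1, hs2⟩ | ⟨hs1, hs2⟩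
      · refine Or.inl ⟨hs1, fun r hr => ?_⟩
        simp at hr
        rcases hr with hr | rfl | hr
        · exact hs2 r (by rw [hk2]; simp [hr])
        · rcases had with h' | h'
          · exact (comm_of_sub hs1 h').symm'
          · exact h'.symm'
        · exact hs2 r (by rw [hk2]; simp [hr])
      · refine Or.inr ⟨hs1, fun r hr => ?_⟩
        simp at hr
        rcases hr with hr | rfl | hr
        · exact hs2 r (by rw [hk2]; simp [hr])
        · rcases had with h' | h'
          · exact h'.symm'
          · exact (comm_of_sub hs1 h').symm'
        · exact hs2 r (by rw [hk2]; simp [hr])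
  · -- c in y : y = m ++ c :: (M ++ d :: Z), X = x ++ m
    exact ⟨x ++ a :: m, M, Z, c, d, by rw [hm1]; simp, cond⟩

theorem reduced_delete {a : Letter N} {x y : Word N}
    (h : Reduced (x ++ a :: y))
    (hcomm : (∀ r ∈ y, Comm a r) ∨ (∀ r ∈ x, Comm a r)) : Reduced (x ++ y) := by
  rw [reduced_iff_not_bp] at h ⊢
  exact fun hbp => h (bp_insert hcomm hbp)

end Deletion
section CrossPair
variable {N : ℕ}

theorem cross_pair {u₁ v₁ : Word N} (hu : Reduced u₁) (hv : Reduced v₁)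
    (hbp : BP (u₁ ++ v₁)) :
    ∃ (x y p q : Word N) (c f : Letter N), u₁ = x ++ c :: y ∧ v₁ = p ++ f :: q ∧
      ((Sub c f ∧ (∀ r ∈ y, Comm c r) ∧ (∀ r ∈ p, Comm c r)) ∨
       (Sub f c ∧ f ≠ c ∧ (∀ r ∈ y, Comm f r) ∧ (∀ r ∈ p, Comm f r))) := by
  obtain ⟨X, Y, Z, a, b, h1, cond⟩ := hbp
  rcases split_of_append h1 with ⟨m, hm1, hm2⟩ | ⟨m, hm1, hm2⟩
  · -- a in u₁ : u₁ = X ++ a :: m, Y ++ b :: Z = m ++ v₁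
    rcases split_of_append hm2.symm with ⟨k, hk1, hk2⟩ | ⟨k, hk1, hk2⟩
    · -- b in m : m = Y ++ b :: k, Z = k ++ v₁ : bad pair inside u₁
      exact absurd ⟨X, Y, k, a, b, by rw [hm1, hk1], cond⟩ (reduced_iff_not_bp.1 hu)
    · -- b in v₁ : v₁ = k ++ b :: Z, Y = m ++ k
      subst hk2
      by_cases hba : b = a
      · refine ⟨X, m, k, Z, a, b, hm1, hk1, Or.inl ⟨hba ▸ Sub.refl' b, ?_, ?_⟩⟩
        · rcases cond with ⟨_, h2⟩ | ⟨_, h2⟩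
          · exact fun r hr => h2 r (by simp [hr])
          · exact fun r hr => hba ▸ h2 r (by simp [hr])
        · rcases cond with ⟨_, h2⟩ | ⟨_, h2⟩
          · exact fun r hr => h2 r (by simp [hr])
          · exact fun r hr => hba ▸ h2 r (by simp [hr])
      · rcases cond with ⟨h1', h2⟩ | ⟨h1', h2⟩
        · exact ⟨X, m, k, Z, a, b, hm1, hk1,
            Or.inl ⟨h1', fun r hr => h2 r (by simp [hr]), fun r hr => h2 r (by simp [hr])⟩⟩
        · exact ⟨X, m, k, Z, a, b, hm1, hk1,
            Or.inr ⟨h1', hba, fun r hr => h2 r (by simp [hr]), fun r hr => h2 r (by simp [hr])⟩⟩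
  · -- a in v₁ : bad pair inside v₁
    exact absurd ⟨m, Y, Z, a, b, hm1, cond⟩ (reduced_iff_not_bp.1 hv)

/-- Chain lemma for a type-I move. -/
theorem chainI {x y p q v' : Word N} {c f : Letter N}
    (hcy : ∀ r ∈ y, Comm c r) (hcp : ∀ r ∈ p, Comm c r) (hsub : Sub c f)
    (hred : Reduced (v' ++ (p ++ f :: q)))
    (hinv : ∀ b' ∈ v', PRAbsLetter b' (x ++ c :: y)) :
    ∀ b' ∈ v', PRAbsLetter b' (x ++ y) ∧ Comm c b' := by
  suffices H : ∀ n s₁ (b' : Letter N) s₂, s₂.length ≤ n → v' = s₁ ++ b' :: s₂ →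
      PRAbsLetter b' (x ++ y) ∧ Comm c b' by
    intro b' hb'
    obtain ⟨s₁, s₂, rfl⟩ := List.append_of_mem hb'
    exact H s₂.length s₁ b' s₂ le_rfl rfl
  intro n
  induction n using Nat.strong_induction_on with
  | _ n ih =>
    intro s₁ b' s₂ hlen hv'
    obtain ⟨X, t, Y, hXY, hpsub, hcomm⟩ := hinv b' (by rw [hv']; simp)
    rcases two_splits hXY with ⟨m, hm1, hm2⟩ | ⟨e1, e2, e3⟩ | ⟨m, hm1, hm2⟩
    · -- t in y : X = x ++ c :: m, y = m ++ t :: Y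
      have hct : Comm c t := hcy t (by rw [hm2]; simp)
      refine ⟨⟨x ++ m, t, Y, by rw [hm2]; simp, hpsub, hcomm⟩, comm_of_sub hpsub.1 hct⟩
    · -- t = c : the chain case, impossible
      exfalso
      have hb'c : Sub b' c := by rw [e2]; exact hpsub.1
      have hsbf : Sub b' f := Sub.trans' hb'c hsub
      have hnotbp := reduced_iff_not_bp.1 hred
      have hnc : ¬ (∀ r ∈ s₂ ++ p, Comm b' r) := by
        intro hall
        exact hnotbp ⟨s₁, s₂ ++ p, q, b', f,
          by rw [hv']; simp, Or.inl ⟨hsbf, hall⟩⟩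
      push_neg at hnc
      obtain ⟨m', hm', hncm⟩ := hnc
      rcases List.mem_append.1 hm' with hm' | hm'
      · -- m' in s₂ : use induction
        obtain ⟨k₁, k₂, rfl⟩ := List.append_of_mem hm'
        have hkl : k₂.length < n := by simp at hlen; omega
        have hIH := ih k₂.length hkl (s₁ ++ b' :: k₁) m' k₂ le_rfl (by rw [hv']; simp)
        exact hncm ((comm_of_sub hb'c hIH.2.symm').symm')
      · -- m' in p
        exact hncm ((comm_of_sub hb'c (hcp m' hm').symm').symm')
    · -- t in x : x = X ++ t :: m, Y = m ++ c :: y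
      have hb'c : Comm b' c := hcomm c (by rw [hm2]; simp)
      refine ⟨⟨X, t, m ++ y, by rw [hm1]; simp, hpsub, fun r hr => hcomm r ?_⟩, hb'c.symm'⟩
      rw [hm2]
      simp at hr ⊢
      tauto

/-- Chain lemma for a type-II move. -/
theorem chainII {x y p q u' : Word N} {c f : Letter N}
    (hfy : ∀ r ∈ y, Comm f r) (hfp : ∀ r ∈ p, Comm f r) (hsub : Sub f c) (hne : f ≠ c)
    (hred : Reduced ((x ++ c :: y) ++ u'))
    (hinv : ∀ s ∈ u', LAbsLetter s (p ++ f :: q)) :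
    ∀ s ∈ u', LAbsLetter s (p ++ q) ∧ Comm f s := by
  suffices H : ∀ n s₁ (s : Letter N) s₂, s₁.length ≤ n → u' = s₁ ++ s :: s₂ →
      LAbsLetter s (p ++ q) ∧ Comm f s by
    intro s hs
    obtain ⟨s₁, s₂, rfl⟩ := List.append_of_mem hs
    exact H s₁.length s₁ s s₂ le_rfl rfl
  intro n
  induction n using Nat.strong_induction_on with
  | _ n ih =>
    intro s₁ s s₂ hlen hu'
    obtain ⟨P, t, Q, hPQ, hssub, hcomm⟩ := hinv s (by rw [hu']; simp)
    rcases two_splits hPQ with ⟨m, hm1, hm2⟩ | ⟨e1, e2, e3⟩ | ⟨m, hm1, hm2⟩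
    · -- t in q : P = p ++ f :: m, q = m ++ t :: Q
      have hsf : Comm s f := hcomm f (by rw [hm1]; simp)
      refine ⟨⟨p ++ m, t, Q, by rw [hm2]; simp, hssub, fun r hr => hcomm r ?_⟩, hsf.symm'⟩
      rw [hm1]
      simp at hr ⊢
      tauto
    · -- t = f : chain case, impossible
      exfalso
      have hssf : Sub s f := by rw [e2]; exact hssub
      have hsc : Sub s c := Sub.trans' hssf hsub
      have hnotbp := reduced_iff_not_bp.1 hred
      have hnc : ¬ (∀ r ∈ y ++ s₁, Comm s r) := by
        intro hall
        exact hnotbp ⟨x, y ++ s₁, s₂, c, s, by rw [hu']; simp, Or.inr ⟨hsc, hall⟩⟩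
      push_neg at hnc
      obtain ⟨m', hm', hncm⟩ := hnc
      rcases List.mem_append.1 hm' with hm' | hm'
      · -- m' in y
        exact hncm (comm_of_sub hssf (hfy m' hm').symm').symm'
      · -- m' in s₁ : induction
        obtain ⟨k₁, k₂, rfl⟩ := List.append_of_mem hm'
        have hIH := ih k₁.length (by simp at hlen; omega) k₁ m' (k₂ ++ s :: s₂) le_rfl
          (by rw [hu']; simp)
        exact hncm (comm_of_sub hssf hIH.2.symm').symm'
    · -- t in p : hm1 : p = P ++ t :: m, hm2 : Q = m ++ f :: q
      exact ⟨⟨P, t, m ++ q, by rw [hm1]; simp, hssub, hcomm⟩,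
        comm_of_sub hssub (hfp t (by rw [hm1]; simp))⟩

end CrossPair
section Existence
variable {N : ℕ}

/-- invariant for the peeling process -/
def Inv (u v u₁ u' v' v₁ : Word N) : Prop :=
  WEquiv u (u₁ ++ u') ∧ WEquiv v (v' ++ v₁) ∧ LAbsWord u' v₁ ∧
  (∀ s ∈ v', PRAbsLetter s u₁) ∧ (∀ a ∈ u', ∀ b ∈ v', Comm a b)

theorem exists_reduced_inv {u v : Word N} (hu : Reduced u) (hv : Reduced v) :
    ∀ (n : ℕ) (u₁ u' v' v₁ : Word N), u₁.length + v₁.length ≤ n →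
      Inv u v u₁ u' v' v₁ →
      ∃ U₁ U' V' V₁, Inv u v U₁ U' V' V₁ ∧ Reduced (U₁ ++ V₁) := by
  intro n
  induction n using Nat.strong_induction_on with
  | _ n ih =>
    intro u₁ u' v' v₁ hlen hinv
    obtain ⟨inv1, inv2, inv3, inv4, inv5⟩ := hinv
    by_cases hred : Reduced (u₁ ++ v₁)
    · exact ⟨u₁, u', v', v₁, ⟨inv1, inv2, inv3, inv4, inv5⟩, hred⟩
    have hu₁u' : Reduced (u₁ ++ u') := reduced_of_wequiv inv1 hu
    have hv'v₁ : Reduced (v' ++ v₁) := reduced_of_wequiv inv2 hv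
    have hu₁ : Reduced u₁ := reduced_append_left hu₁u'
    have hv₁ : Reduced v₁ := reduced_append_right hv'v₁
    have hbp : BP (u₁ ++ v₁) := by
      by_contra hn
      exact hred (reduced_iff_not_bp.2 hn)
    obtain ⟨x, y, p, q, c, f, hu₁e, hv₁e, hcase⟩ := cross_pair hu₁ hv₁ hbp
    rcases hcase with ⟨hsub, hcy, hcp⟩ | ⟨hsub, hne, hfy, hfp⟩
    · -- type I move : c goes to u'
      have hchain := chainI hcy hcp hsub (hv₁e ▸ hv'v₁) (fun b' hb' => hu₁e ▸ inv4 b' hb')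
      have hlen' : (x ++ y).length + v₁.length < n := by
        have := congrArg List.length hu₁e
        simp at this ⊢
        omega
      refine ih _ hlen' (x ++ y) (c :: u') v' v₁ le_rfl ⟨?_, inv2, ?_, ?_, ?_⟩
      · refine inv1.trans ?_
        have := wequiv_move_right (a := c) (y := y) x u' hcy
        rw [hu₁e]
        simpa using this
      · intro s hs
        rcases List.mem_cons.1 hs with rfl | hs
        · exact ⟨p, f, q, hv₁e, hsub, hcp⟩
        · exact inv3 s hs
      · exact fun b' hb' => (hchain b' hb').1
      · intro a ha b hb
        rcases List.mem_cons.1 ha with rfl | ha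
        · exact (hchain b hb).2
        · exact inv5 a ha b hb
    · -- type II move : f goes to v'
      have hchain := chainII hfy hfp hsub hne (hu₁e ▸ hu₁u') (fun s hs => hv₁e ▸ inv3 s hs)
      have hlen' : u₁.length + (p ++ q).length < n := by
        have := congrArg List.length hv₁e
        simp at this ⊢
        omega
      refine ih _ hlen' u₁ u' (v' ++ [f]) (p ++ q) le_rfl ⟨inv1, ?_, ?_, ?_, ?_⟩
      · refine inv2.trans ?_
        have := wequiv_move_left (a := f) (y := p) v' q hfp
        rw [hv₁e]
        simpa using this
      · exact fun s hs => (hchain s hs).1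
      · intro s hs
        rcases List.mem_append.1 hs with hs | hs
        · exact inv4 s hs
        · simp at hs; subst hs
          exact ⟨x, c, y, hu₁e, ⟨hsub, hne⟩, hfy⟩
      · intro a ha b hb
        rcases List.mem_append.1 hb with hb | hb
        · exact inv5 a ha b hb
        · simp at hb; subst hb
          exact ((hchain a ha).2).symm'

end Existence
section Cancel
variable {N : ℕ}

theorem Red.rfl' (u : Word N) : Red u u := Relation.ReflTransGen.refl

theorem Red.single_cancel {u v : Word N} (h : CancelStep u v) : Red u v :=
  Relation.ReflTransGen.single (Or.inr h)

theorem red_cancel_labs {A v₁ : Word N} {s : Letter N} (h : LAbsLetter s v₁) :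
    Red (A ++ s :: v₁) (A ++ v₁) := by
  obtain ⟨α, t, β, rfl, hsub, hcomm⟩ := h
  have h1 : WEquiv (A ++ s :: (α ++ t :: β)) (A ++ α ++ s :: t :: β) :=
    wequiv_move_right (z := t :: β) A hcomm
  have h2 : CancelStep (A ++ α ++ s :: t :: β) (A ++ α ++ t :: β) :=
    ⟨A ++ α, β, t, s, hsub, Or.inr rfl, rfl⟩
  refine (Red.of_wequiv h1).trans ?_
  refine (Red.single_cancel h2).trans ?_
  exact Red.of_wequiv (by simpa using WEquiv.refl (A ++ α ++ t :: β))

theorem red_cancel_prabs {u₁ Z : Word N} {s : Letter N} (h : PRAbsLetter s u₁) :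
    Red (u₁ ++ s :: Z) (u₁ ++ Z) := by
  obtain ⟨X, t, Y, rfl, hsub, hcomm⟩ := h
  have h1 : WEquiv ((X ++ [t]) ++ Y ++ s :: Z) ((X ++ [t]) ++ s :: (Y ++ Z)) :=
    wequiv_move_left (X ++ [t]) Z hcomm
  have h2 : CancelStep (X ++ t :: s :: (Y ++ Z)) (X ++ t :: (Y ++ Z)) :=
    ⟨X, Y ++ Z, t, s, hsub.1, Or.inl rfl, rfl⟩
  refine (Red.of_wequiv (by simpa using h1)).trans ?_
  refine (Red.single_cancel (by simpa using h2)).trans ?_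
  exact Red.of_wequiv (by simpa using WEquiv.refl (X ++ t :: (Y ++ Z)))

theorem red_cancel_u' {u₁ v' v₁ : Word N} :
    ∀ u' : Word N, (∀ s ∈ u', LAbsLetter s v₁) → (∀ s ∈ u', ∀ b ∈ v', Comm s b) →
      Red (u₁ ++ u' ++ v' ++ v₁) (u₁ ++ v' ++ v₁) := by
  intro u'
  induction u' using List.reverseRecOn with
  | nil => intro _ _; simpa using Red.rfl' (u₁ ++ v' ++ v₁)
  | append_singleton u'' s ihs =>
    intro h3 h5
    have hmv : WEquiv ((u₁ ++ u'') ++ s :: (v' ++ v₁)) ((u₁ ++ u'') ++ v' ++ s :: v₁) :=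
      wequiv_move_right (z := v₁) (u₁ ++ u'') (fun r hr => h5 s (by simp) r hr)
    have hcan : Red (((u₁ ++ u'') ++ v') ++ s :: v₁) (((u₁ ++ u'') ++ v') ++ v₁) :=
      red_cancel_labs (h3 s (by simp))
    have e1 : u₁ ++ (u'' ++ [s]) ++ v' ++ v₁ = (u₁ ++ u'') ++ s :: (v' ++ v₁) := by simp
    refine (e1 ▸ (Red.of_wequiv hmv)).trans ?_
    refine (Red.trans (by simpa using hcan) ?_)
    have := ihs (fun a ha => h3 a (by simp [ha])) (fun a ha => h5 a (by simp [ha]))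
    simpa using this

theorem red_cancel_v' {u₁ v₁ : Word N} :
    ∀ v' : Word N, (∀ s ∈ v', PRAbsLetter s u₁) → Red (u₁ ++ v' ++ v₁) (u₁ ++ v₁) := by
  intro v'
  induction v' with
  | nil => intro _; simpa using Red.rfl' (u₁ ++ v₁)
  | cons b rest ihs =>
    intro h4
    have hcan : Red (u₁ ++ b :: (rest ++ v₁)) (u₁ ++ (rest ++ v₁)) :=
      red_cancel_prabs (h4 b (by simp))
    refine Red.trans (by simpa using hcan) ?_
    simpa using ihs (fun a ha => h4 a (by simp [ha]))

theorem red_total {u v u₁ u' v' v₁ : Word N} (hinv : Inv u v u₁ u' v' v₁) :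
    Red (u ++ v) (u₁ ++ v₁) := by
  obtain ⟨inv1, inv2, inv3, inv4, inv5⟩ := hinv
  refine (Red.of_wequiv (inv1.append inv2)).trans ?_
  have h1 := red_cancel_u' (u₁ := u₁) (v' := v') (v₁ := v₁) u' inv3 inv5
  have h2 := red_cancel_v' (u₁ := u₁) (v₁ := v₁) v' inv4
  refine Red.trans (by simpa using h1) (by simpa using h2)

end Cancel
section Levi
variable {N : ℕ}

theorem wequiv_concat {z : Word N} {x : Letter N} {w : Word N} (h : WEquiv (z ++ [x]) w) :
    ∃ w₁ w₂, w = w₁ ++ x :: w₂ ∧ (∀ r ∈ w₂, Comm x r) ∧ WEquiv z (w₁ ++ w₂) := by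
  induction h with
  | refl => exact ⟨z, [], by simp, by simp, by simpa using WEquiv.refl z⟩
  | tail hw hs ih =>
    obtain ⟨w₁, w₂, rfl, hcm, hzw⟩ := ih
    obtain ⟨P, Q, cc, dd, hcd, heq, rfl⟩ := hs
    rcases two_splits heq with ⟨m, hm1, hm2⟩ | ⟨e1, e2, e3⟩ | ⟨m, hm1, hm2⟩
    · -- swap inside w₂ : P = w₁ ++ x :: m, w₂ = m ++ cc :: dd :: Q
      refine ⟨w₁, m ++ dd :: cc :: Q, by rw [hm1]; simp, ?_, ?_⟩
      · intro r hr
        refine hcm r ?_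
        rw [hm2]
        simp at hr ⊢
        tauto
      · rw [hm2] at hzw
        refine hzw.trans (WEquiv.single ?_)
        exact ⟨w₁ ++ m, Q, cc, dd, hcd, by simp, by simp⟩
    · -- x = cc at swap position
      refine ⟨P ++ [dd], Q, by rw [← e2]; simp, fun r hr => hcm r (by rw [e3]; simp [hr]), ?_⟩
      rw [e1, e3] at hzw
      simpa using hzw
    · cases m with
      | nil =>
          rw [List.nil_append] at hm2
          injection hm2 with f1 f2
          refine ⟨P, cc :: w₂, by rw [← f1, f2], ?_, ?_⟩
          · intro r hr
            rcases List.mem_cons.1 hr with rfl | hr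
            · exact (f1 ▸ hcd).symm'
            · exact hcm r hr
          · rw [hm1] at hzw
            simpa using hzw
      | cons e m₂ =>
          injection hm2 with f1 f2
          refine ⟨P ++ dd :: cc :: m₂, w₂, by rw [f2, f1]; simp, hcm, ?_⟩
          rw [hm1, ← f1] at hzw
          refine (by simpa using hzw : WEquiv z (P ++ (cc :: dd :: (m₂ ++ w₂)))).trans
            (WEquiv.single ?_)
          exact ⟨P, m₂ ++ w₂, cc, dd, hcd, by simp, by simp⟩

theorem levi {a b c d : Word N} (h : WEquiv (a ++ b) (c ++ d)) :
    ∃ p q r s : Word N, WEquiv a (p ++ q) ∧ WEquiv b (r ++ s) ∧ WEquiv c (p ++ r) ∧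
      WEquiv d (q ++ s) ∧ ∀ x ∈ q, ∀ y ∈ r, Comm x y := by
  induction d using List.reverseRecOn generalizing a b with
  | nil =>
      refine ⟨a, [], b, [], by simpa using WEquiv.refl a, by simpa using WEquiv.refl b,
        by simpa using h.symm, by simp [WEquiv.refl], by simp⟩
  | append_singleton d₀ x ihd =>
      have h' : WEquiv ((c ++ d₀) ++ [x]) (a ++ b) := by
        refine WEquiv.symm ?_
        have : c ++ (d₀ ++ [x]) = (c ++ d₀) ++ [x] := by simp
        rw [← this]; exact h
      obtain ⟨w₁, w₂, hab, hxc, hcd⟩ := wequiv_concat h'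
      rcases split_of_append hab with ⟨m, hm1, hm2⟩ | ⟨m, hm1, hm2⟩
      · -- x inside a : a = w₁ ++ x :: m, w₂ = m ++ b
        have hcm : ∀ r ∈ m, Comm x r := fun r hr => hxc r (by rw [hm2]; simp [hr])
        have hin : WEquiv ((w₁ ++ m) ++ b) (c ++ d₀) := by
          refine WEquiv.symm ?_
          have : (w₁ ++ m) ++ b = w₁ ++ w₂ := by rw [hm2]; simp
          rw [this]; exact hcd
        obtain ⟨p, q, r, s, h1, h2, h3, h4, hqr⟩ := ihd hin
        have hsb : ∀ r' ∈ s, Comm x r' := by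
          intro r' hr'
          have : r' ∈ b := (h2.perm.mem_iff).2 (by simp [hr'])
          exact hxc r' (by rw [hm2]; simp [this])
        have hrb : ∀ y ∈ r, Comm x y := by
          intro y hy
          have : y ∈ b := (h2.perm.mem_iff).2 (by simp [hy])
          exact hxc y (by rw [hm2]; simp [this])
        refine ⟨p, q ++ [x], r, s, ?_, h2, h3, ?_, ?_⟩
        · have step1 : WEquiv a ((w₁ ++ m) ++ [x]) := by
            rw [hm1]
            simpa using wequiv_move_right (a := x) (y := m) w₁ [] hcm
          refine step1.trans ?_
          have := h1.append_right [x]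
          simpa using this
        · have step1 : WEquiv (d₀ ++ [x]) ((q ++ s) ++ [x]) := by
            simpa using h4.append_right [x]
          refine step1.trans ?_
          simpa using wequiv_move_left (a := x) (y := s) q [] hsb
        · intro x' hx' y hy
          rcases List.mem_append.1 hx' with hx' | hx'
          · exact hqr x' hx' y hy
          · simp at hx'; subst hx'
            exact hrb y hy
      · -- x inside b : b = m ++ x :: w₂, w₁ = a ++ m
        have hin : WEquiv (a ++ (m ++ w₂)) (c ++ d₀) := by
          refine WEquiv.symm ?_
          have : a ++ (m ++ w₂) = w₁ ++ w₂ := by rw [hm2]; simp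
          rw [this]; exact hcd
        obtain ⟨p, q, r, s, h1, h2, h3, h4, hqr⟩ := ihd hin
        refine ⟨p, q, r, s ++ [x], h1, ?_, h3, ?_, hqr⟩
        · have step1 : WEquiv b ((m ++ w₂) ++ [x]) := by
            rw [hm1]
            simpa using wequiv_move_right (a := x) (y := w₂) m [] hxc
          refine step1.trans ?_
          have := h2.append_right [x]
          simpa using this
        · have := h4.append_right [x]
          simpa using this

end Levi
section Uniqueness
variable {N : ℕ}

theorem kill_concat {P R₀ : Word N} {r : Letter N} {Q' R' S' : Word N}
    {bigL bigR : Word N}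
    (hwL : WEquiv bigL (P ++ (R₀ ++ [r])))
    (hxR : WEquiv bigR (Q' ++ S'))
    (hred : Reduced (bigL ++ bigR))
    (hlabs : LAbsLetter r (R' ++ S'))
    (hcommQ' : ∀ y ∈ Q', Comm r y)
    (hR'sub : ∀ t ∈ R', PRAbsLetter t (P ++ (R₀ ++ [r]))) : False := by
  obtain ⟨α, t, β, hT, hsubrt, hcα⟩ := hlabs
  rcases split_of_append hT with ⟨m, hm1, hm2⟩ | ⟨m, hm1, hm2⟩
  · -- t in R' : R' = α ++ t :: m, β = m ++ S'
    obtain ⟨γ, t₂, δ, hG, hpsub, hcδ⟩ := hR'sub t (by rw [hm1]; simp)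
    have hG' : (P ++ R₀) ++ [r] = γ ++ t₂ :: δ := by rw [← hG]; simp
    rcases last_of_concat hG' with ⟨hδ, hrt₂, _⟩ | ⟨δ₀, hδ⟩
    · -- t₂ = r : then t ⊊ r and r ⊆ t
      exact hpsub.2 (Sub.antisymm' hpsub.1 (hrt₂ ▸ hsubrt))
    · -- r occurs after t₂ : t commutes with r, contradiction with r ⊆ t
      have : Comm t r := hcδ r (by rw [hδ]; simp)
      exact not_comm_of_sub hsubrt this.symm'
  · -- t in S' : S' = m ++ t :: β, α = R' ++ m
    have hW : WEquiv (bigL ++ bigR) ((P ++ (R₀ ++ [r])) ++ (Q' ++ S')) := hwL.append hxR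
    have hredW := reduced_of_wequiv hW hred
    refine reduced_iff_not_bp.1 hredW ⟨P ++ R₀, Q' ++ m, β, r, t, by rw [hm1]; simp, ?_⟩
    refine Or.inl ⟨hsubrt, fun y hy => ?_⟩
    rcases List.mem_append.1 hy with hy | hy
    · exact hcommQ' y hy
    · exact hcα y (by rw [hm2]; simp [hy])

theorem kill_head {bigL bigR : Word N} {r' : Letter N} {R₁ S' : Word N}
    (hxR : WEquiv bigR (r' :: (R₁ ++ S')))
    (hprabs : PRAbsLetter r' bigL)
    (hred : Reduced (bigL ++ bigR)) : False := by
  obtain ⟨γ, t, δ, rfl, hpsub, hcδ⟩ := hprabs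
  have hW : WEquiv ((γ ++ t :: δ) ++ bigR) ((γ ++ t :: δ) ++ (r' :: (R₁ ++ S'))) :=
    (WEquiv.refl _).append hxR
  have hredW := reduced_of_wequiv hW hred
  exact reduced_iff_not_bp.1 hredW
    ⟨γ, δ, R₁ ++ S', t, r', by simp, Or.inr ⟨hpsub.1, hcδ⟩⟩

theorem uniqueness {u v u₁ u' v' v₁ w₁ w' x' x₁ : Word N}
    (D1 : WEquiv u (u₁ ++ u')) (D2 : WEquiv v (v' ++ v₁)) (D3 : LAbsWord u' v₁)
    (D4 : ∀ s ∈ v', PRAbsLetter s u₁) (D5 : ∀ a ∈ u', ∀ b ∈ v', Comm a b)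
    (D6 : Reduced (u₁ ++ v₁))
    (E1 : WEquiv u (w₁ ++ w')) (E2 : WEquiv v (x' ++ x₁)) (E3 : LAbsWord w' x₁)
    (E4 : ∀ s ∈ x', PRAbsLetter s w₁) (E5 : ∀ a ∈ w', ∀ b ∈ x', Comm a b)
    (E6 : Reduced (w₁ ++ x₁)) :
    WEquiv u₁ w₁ ∧ WEquiv u' w' ∧ WEquiv v' x' ∧ WEquiv v₁ x₁ := by
  obtain ⟨P, Q, R, S, hu1, hu2, hw1, hw2, hQR⟩ := levi (D1.symm.trans E1)
  obtain ⟨P', Q', R', S', hv1, hv2, hx1, hx2, hQ'R'⟩ := levi (D2.symm.trans E2)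
  -- kill R
  have hR : R = [] := by
    rcases R.eq_nil_or_concat with h | ⟨R₀, r, rfl⟩
    · exact h
    exfalso
    rw [List.concat_eq_append] at hw1
    have hrU' : r ∈ u' := hu2.symm.mem (by simp)
    refine kill_concat (P := P) (R₀ := R₀) (Q' := Q') (R' := R') (S' := S')
      hw1 hx2 E6 (labs_of_wequiv hv2 (D3 r hrU')) ?_ ?_
    · intro y hy
      exact D5 r hrU' y (hv1.symm.mem (by simp [hy]))
    · intro t ht
      have htx' : t ∈ x' := hx1.symm.mem (by simp [ht])
      exact prabs_of_wequiv hw1 (E4 t htx')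
  -- kill Q
  have hQ : Q = [] := by
    rcases Q.eq_nil_or_concat with h | ⟨Q₀, q, rfl⟩
    · exact h
    exfalso
    rw [List.concat_eq_append] at hu1
    have hqW' : q ∈ w' := hw2.symm.mem (by simp)
    refine kill_concat (P := P) (R₀ := Q₀) (Q' := R') (R' := Q') (S' := S')
      hu1 hv2 D6 (labs_of_wequiv hx2 (E3 q hqW')) ?_ ?_
    · intro y hy
      exact E5 q hqW' y (hx1.symm.mem (by simp [hy]))
    · intro t ht
      have htv' : t ∈ v' := hv1.symm.mem (by simp [ht])
      exact prabs_of_wequiv hu1 (D4 t htv')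
  subst hR hQ
  have huw : WEquiv u₁ w₁ := by
    refine (by simpa using hu1 : WEquiv u₁ P).trans
      (by simpa using hw1 : WEquiv w₁ P).symm
  -- kill R'
  have hR' : R' = [] := by
    cases R' with
    | nil => rfl
    | cons r' R₁ =>
      exfalso
      have hrx' : r' ∈ x' := hx1.symm.mem (by simp)
      refine kill_head (bigL := u₁) (bigR := v₁) (R₁ := R₁) (S' := S')
        (by simpa using hv2) ?_ D6
      exact prabs_of_wequiv huw.symm (E4 r' hrx')
  -- kill Q'
  have hQ' : Q' = [] := by
    cases Q' with
    | nil => rfl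
    | cons q' Q₁ =>
      exfalso
      have hqv' : q' ∈ v' := hv1.symm.mem (by simp)
      refine kill_head (bigL := w₁) (bigR := x₁) (R₁ := Q₁) (S' := S')
        (by simpa using hx2) ?_ E6
      exact prabs_of_wequiv huw (D4 q' hqv')
  subst hR' hQ'
  refine ⟨huw, ?_, ?_, ?_⟩
  · exact (by simpa using hu2 : WEquiv u' S).trans (by simpa using hw2 : WEquiv w' S).symm
  · exact (by simpa using hv1 : WEquiv v' P').trans (by simpa using hx1 : WEquiv x' P').symm
  · exact (by simpa using hv2 : WEquiv v₁ S').trans (by simpa using hx2 : WEquiv x₁ S').symm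

end Uniqueness
end PS

open PS in
/-- Decomposition Lemma. -/
theorem decomposition_lemma {N : ℕ} (u v : Word N)
    (hu : Reduced u) (hv : Reduced v) :
    ∃ u₁ u' v' v₁ : Word N,
      WEquiv u (u₁ ++ u') ∧ WEquiv v (v' ++ v₁) ∧
      LAbsWord u' v₁ ∧ (∀ s ∈ v', PRAbsLetter s u₁) ∧
      (∀ a ∈ u', ∀ b ∈ v', Comm a b) ∧
      Reduced (u₁ ++ v₁) ∧ Red (u ++ v) (u₁ ++ v₁) ∧
      ∀ w₁ w' x' x₁ : Word N,
        WEquiv u (w₁ ++ w') → WEquiv v (x' ++ x₁) →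
        LAbsWord w' x₁ → (∀ s ∈ x', PRAbsLetter s w₁) →
        (∀ a ∈ w', ∀ b ∈ x', Comm a b) → Reduced (w₁ ++ x₁) →
        WEquiv u₁ w₁ ∧ WEquiv u' w' ∧ WEquiv v' x' ∧ WEquiv v₁ x₁ := by
  have hinv0 : Inv u v u [] [] v := by
    refine ⟨by simpa using WEquiv.refl u, by simpa using WEquiv.refl v, ?_, ?_, ?_⟩
    · intro s hs; simp at hs
    · intro s hs; simp at hs
    · intro a ha; simp at ha
  obtain ⟨U₁, U', V', V₁, hinv, hred⟩ :=
    exists_reduced_inv hu hv (u.length + v.length) u [] [] v le_rfl hinv0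
  obtain ⟨i1, i2, i3, i4, i5⟩ := hinv
  refine ⟨U₁, U', V', V₁, i1, i2, i3, i4, i5, hred,
    red_total ⟨i1, i2, i3, i4, i5⟩, ?_⟩
  intro w₁ w' x' x₁ hw1 hw2 hw3 hw4 hw5 hw6
  exact uniqueness i1 i2 i3 i4 i5 hred hw1 hw2 hw3 hw4 hw5 hw6
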